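/- For projective partitions p, q ∈ P(k,k), define q ⪯ p iff pq = q (equivalently qp = q). Then for any N ≥ 2, q ⪯ p holds if and only if the associated projections satisfy T_q ≤ T_p (i.e., T_p T_q = T_q T_p = T_q). -/

import Mathlib

/-- A two-row partition with `k` upper and `l` lower points, encoded as the
equivalence relation whose classes are the blocks. -/
abbrev PP (k l : ℕ) := Setoid (Fin k ⊕ Fin l)

/-- The involution `p*` (turning `p` upside down). -/
def swapP {k l : ℕ} (p : PP k l) : PP l k := Setoid.comap Sum.swap p

/-- Disjoint union of two setoids. -/
def sumSetoid {α β : Type*} (s : Setoid α) (t : Setoid β) : Setoid (α ⊕ β) where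
  r := Sum.LiftRel s.r t.r
  iseqv := by
    refine ⟨fun x => ?_, fun {x y} h => ?_, fun {x y z} h1 h2 => ?_⟩
    · cases x with
      | inl a => exact Sum.LiftRel.inl (s.iseqv.refl a)
      | inr b => exact Sum.LiftRel.inr (t.iseqv.refl b)
    · cases h with
      | inl h => exact Sum.LiftRel.inl (s.iseqv.symm h)
      | inr h => exact Sum.LiftRel.inr (t.iseqv.symm h)
    · cases h1 with
      | inl h1 =>
        cases h2 with
        | inl h2 => exact Sum.LiftRel.inl (s.iseqv.trans h1 h2)
      | inr h1 =>
        cases h2 with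
        | inr h2 => exact Sum.LiftRel.inr (t.iseqv.trans h1 h2)

/-- Reindexing equivalence for the horizontal concatenation (tensor product). -/
def tensorEquiv (k l k' l' : ℕ) :
    (Fin (k + k') ⊕ Fin (l + l')) ≃ ((Fin k ⊕ Fin l) ⊕ (Fin k' ⊕ Fin l')) :=
  (Equiv.sumCongr finSumFinEquiv.symm finSumFinEquiv.symm).trans
    (Equiv.sumSumSumComm (Fin k) (Fin k') (Fin l) (Fin l'))

/-- Tensor product (horizontal concatenation) of partitions. -/
def tensorP {k l k' l' : ℕ} (p : PP k l) (q : PP k' l') : PP (k + k') (l + l') :=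
  Setoid.comap (tensorEquiv k l k' l') (sumSetoid p q)

/-- The relation on `k ⊔ l ⊔ m` points generated by `p` (upper part) and `q` (lower part). -/
def midRel {k l m : ℕ} (p : PP k l) (q : PP l m) :
    (Fin k ⊕ (Fin l ⊕ Fin m)) → (Fin k ⊕ (Fin l ⊕ Fin m)) → Prop := fun x y =>
  (∃ a b : Fin k ⊕ Fin l, p.r a b ∧ x = Sum.map id Sum.inl a ∧ y = Sum.map id Sum.inl b) ∨
  (∃ a b : Fin l ⊕ Fin m, q.r a b ∧ x = Sum.inr a ∧ y = Sum.inr b)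

/-- The equivalence relation generated on `k ⊔ l ⊔ m` in the composition procedure. -/
def bigS {k l m : ℕ} (p : PP k l) (q : PP l m) : Setoid (Fin k ⊕ (Fin l ⊕ Fin m)) :=
  Relation.EqvGen.setoid (midRel p q)

/-- `compP q p` is the vertical composition `qp` (apply `p : P(k,l)` first, then `q : P(l,m)`). -/
def compP {k l m : ℕ} (q : PP l m) (p : PP k l) : PP k m :=
  Setoid.comap (Sum.map id Sum.inr) (bigS p q)

/-- `rlP q p` : the number of closed loops removed in the composition `qp`,
i.e. the blocks of the generated relation consisting only of middle points. -/
noncomputable def rlP {k l m : ℕ} (q : PP l m) (p : PP k l) : ℕ :=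
  Nat.card {c : Quotient (bigS p q) //
    ∀ x, Quotient.mk (bigS p q) x = c → ∃ b : Fin l, x = Sum.inr (Sum.inl b)}

/-- `b(p)` : number of blocks. -/
noncomputable def bP {k l : ℕ} (p : PP k l) : ℕ := Nat.card (Quotient p)

/-- `t(p)` : number of through-blocks (blocks meeting both rows). -/
noncomputable def tP {k l : ℕ} (p : PP k l) : ℕ :=
  Nat.card {c : Quotient p // (∃ a : Fin k, Quotient.mk p (Sum.inl a) = c) ∧
    (∃ b : Fin l, Quotient.mk p (Sum.inr b) = c)}

/-- `β(p) = b(p) - t(p)` : number of non-through-blocks. -/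
noncomputable def betaP {k l : ℕ} (p : PP k l) : ℕ := bP p - tP p

/-- The identity partition `|^{⊗k}`. -/
def idP (k : ℕ) : PP k k := Setoid.ker (Sum.elim (fun i : Fin k => i) (fun i : Fin k => i))

/-- A pair partition: all blocks have size two. -/
def isPair {k l : ℕ} (p : PP k l) : Prop := ∀ x, Nat.card {y // p.r x y} = 2

/-- A through-partition: a pair partition each of whose blocks connects exactly one
upper point to exactly one lower point. -/
def isThrough {k : ℕ} (p : PP k k) : Prop :=
  isPair p ∧ (∀ a b : Fin k, p.r (Sum.inl a) (Sum.inl b) → a = b) ∧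
    (∀ a b : Fin k, p.r (Sum.inr a) (Sum.inr b) → a = b)

/-- A building partition. -/
def isBuilding {k l : ℕ} (p : PP k l) : Prop :=
  (∀ b b' : Fin l, p.r (Sum.inr b) (Sum.inr b') → b = b') ∧
  (∀ b : Fin l, ∃ a : Fin k, p.r (Sum.inl a) (Sum.inr b)) ∧
  (∀ b b' : Fin l, ∀ a a' : Fin k, b < b' →
    IsLeast {x : Fin k | p.r (Sum.inl x) (Sum.inr b)} a →
    IsLeast {x : Fin k | p.r (Sum.inl x) (Sum.inr b')} a' → a < a')

/-- A projective partition: symmetric and idempotent. -/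
def isProjective {k : ℕ} (p : PP k k) : Prop := swapP p = p ∧ compP p p = p

/-- Linear position of the points, reading the upper row left to right and then the
lower row right to left. -/
def posP (k l : ℕ) : Fin k ⊕ Fin l → ℕ :=
  Sum.elim (fun i => (i : ℕ)) (fun j => k + (l - 1 - (j : ℕ)))

/-- Noncrossing partitions. -/
def isNC {k l : ℕ} (p : PP k l) : Prop :=
  ¬ ∃ x1 x2 x3 x4 : Fin k ⊕ Fin l,
    posP k l x1 < posP k l x2 ∧ posP k l x2 < posP k l x3 ∧ posP k l x3 < posP k l x4 ∧
    p.r x1 x3 ∧ p.r x2 x4 ∧ ¬ p.r x1 x2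

open scoped Classical in
/-- The (unnormalized) linear map `T̊_p` associated to a partition, as a matrix. -/
noncomputable def Tmat0 {k l : ℕ} (N : ℕ) (p : PP k l) :
    Matrix (Fin l → Fin N) (Fin k → Fin N) ℂ :=
  fun j i => if (∀ x y, p.r x y → Sum.elim i j x = Sum.elim i j y) then 1 else 0

/-- The normalized map `T_p = N^{-β(p)/2} T̊_p`. -/
noncomputable def TmatN {k l : ℕ} (N : ℕ) (p : PP k l) :
    Matrix (Fin l → Fin N) (Fin k → Fin N) ℂ :=
  ((N : ℂ) ^ (-(betaP p : ℂ) / 2)) • Tmat0 N p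

section Aux
open Matrix

lemma fin_one_ne_zero {N : ℕ} (hN : 2 ≤ N) :
    (⟨1, by omega⟩ : Fin N) ≠ ⟨0, by omega⟩ := by
  intro h
  have : (1 : ℕ) = 0 := congrArg Fin.val h
  omega

lemma Tmat0_inj {k : ℕ} {N : ℕ} (hN : 2 ≤ N) {p q : PP k k}
    (h : Tmat0 N p = Tmat0 N q) : p = q := by
  classical
  have key : ∀ (p q : PP k k), Tmat0 N p = Tmat0 N q → ∀ x y, p.r x y → q.r x y := by
    intro p q h x y hxy
    set f : Fin k ⊕ Fin k → Fin N := fun z => if q.r x z then (⟨1, by omega⟩ : Fin N) else ⟨0, by omega⟩ with hf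
    have helim : ∀ z, Sum.elim (f ∘ Sum.inl) (f ∘ Sum.inr) z = f z := by
      intro z; cases z <;> rfl
    have hq1 : Tmat0 N q (f ∘ Sum.inr) (f ∘ Sum.inl) = 1 := by
      simp only [Tmat0]
      rw [if_pos]
      intro u v huv
      rw [helim, helim, hf]
      simp only
      congr 1
      exact propext ⟨fun h' => q.iseqv.trans h' huv, fun h' => q.iseqv.trans h' (q.iseqv.symm huv)⟩
    have hp1 : (∀ u v, p.r u v → Sum.elim (f ∘ Sum.inl) (f ∘ Sum.inr) u
        = Sum.elim (f ∘ Sum.inl) (f ∘ Sum.inr) v) := by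
      by_contra hcon
      have : Tmat0 N p (f ∘ Sum.inr) (f ∘ Sum.inl) = 0 := by
        simp only [Tmat0]; rw [if_neg hcon]
      rw [h, hq1] at this
      exact one_ne_zero this
    have := hp1 x y hxy
    rw [helim, helim, hf] at this
    simp only at this
    rw [if_pos (q.iseqv.refl x)] at this
    by_contra hnq
    rw [if_neg hnq] at this
    exact fin_one_ne_zero hN this
  exact Setoid.ext fun x y => ⟨key p q h x y, key q p h.symm x y⟩

lemma elim_swap {α : Type*} {a b : ℕ} (i : Fin a → α) (j : Fin b → α)
    (x : Fin b ⊕ Fin a) : Sum.elim i j (Sum.swap x) = Sum.elim j i x := by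
  cases x <;> rfl

lemma Tmat0_transpose {k : ℕ} (N : ℕ) (p : PP k k) :
    (Tmat0 N p)ᵀ = Tmat0 N (swapP p) := by
  ext i j
  simp only [Matrix.transpose_apply, Tmat0]
  congr 1
  apply propext
  constructor
  · intro h x y hxy
    have := h (Sum.swap x) (Sum.swap y) hxy
    rwa [elim_swap, elim_swap] at this
  · intro h x y hxy
    have hxy' : (swapP p).r (Sum.swap x) (Sum.swap y) := by
      show p.r (Sum.swap (Sum.swap x)) (Sum.swap (Sum.swap y))
      rwa [Sum.swap_swap, Sum.swap_swap]
    have := h (Sum.swap x) (Sum.swap y) hxy'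
    rwa [elim_swap, elim_swap] at this

lemma Tmat0_const_entry {N : ℕ} (c : Fin N) {a b : ℕ} (r : PP a b) :
    Tmat0 N r (fun _ => c) (fun _ => c) = 1 := by
  simp only [Tmat0]
  rw [if_pos]
  intro x y _
  cases x <;> cases y <;> rfl

end Aux

section Comp
open Matrix

variable {k N : ℕ}

/-- A middle point. -/
abbrev midPt {k : ℕ} (b : Fin k) : Fin k ⊕ (Fin k ⊕ Fin k) := Sum.inr (Sum.inl b)

/-- The "middle-only class" predicate. -/
def MidC (p q : PP k k) (c : Quotient (bigS q p)) : Prop :=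
  ∀ x, Quotient.mk (bigS q p) x = c → ∃ b : Fin k, x = Sum.inr (Sum.inl b)

lemma rlP_eq (p q : PP k k) : rlP p q = Nat.card {c : Quotient (bigS q p) // MidC p q c} := rfl

/-- The middle-extension property. -/
def GoodF (p q : PP k k) (i j m : Fin k → Fin N) : Prop :=
  ∀ x y, (bigS q p).r x y →
    Sum.elim i (Sum.elim m j) x = Sum.elim i (Sum.elim m j) y

lemma compP_r (p q : PP k k) (x y : Fin k ⊕ Fin k) :
    (compP p q).r x y ↔ (bigS q p).r (Sum.map id Sum.inr x) (Sum.map id Sum.inr y) :=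
  Iff.rfl

lemma goodF_iff (p q : PP k k) (i j m : Fin k → Fin N) :
    GoodF p q i j m ↔
      ((∀ x y, p.r x y → Sum.elim m j x = Sum.elim m j y) ∧
       (∀ x y, q.r x y → Sum.elim i m x = Sum.elim i m y)) := by
  constructor
  · intro h
    constructor
    · intro x y hxy
      have hb : (bigS q p).r (Sum.inr x) (Sum.inr y) :=
        Relation.EqvGen.rel _ _ (Or.inr ⟨x, y, hxy, rfl, rfl⟩)
      have := h _ _ hb
      cases x <;> cases y <;> simpa using this
    · intro x y hxy
      have hb : (bigS q p).r (Sum.map id Sum.inl x) (Sum.map id Sum.inl y) :=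
        Relation.EqvGen.rel _ _ (Or.inl ⟨x, y, hxy, rfl, rfl⟩)
      have := h _ _ hb
      cases x <;> cases y <;> simpa using this
  · rintro ⟨hp, hq⟩ x y hxy
    induction hxy with
    | rel x y h =>
      rcases h with ⟨a, b, hab, rfl, rfl⟩ | ⟨a, b, hab, rfl, rfl⟩
      · have := hq _ _ hab
        cases a <;> cases b <;> simpa using this
      · have := hp _ _ hab
        cases a <;> cases b <;> simpa using this
    | refl => rfl
    | symm _ _ _ ih => exact ih.symm
    | trans _ _ _ _ _ ih1 ih2 => exact ih1.trans ih2

lemma goodF_outer (p q : PP k k) (i j m : Fin k → Fin N) (h : GoodF p q i j m) :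
    ∀ x y, (compP p q).r x y → Sum.elim i j x = Sum.elim i j y := by
  intro x y hxy
  have := h _ _ ((compP_r p q x y).1 hxy)
  cases x <;> cases y <;> simpa using this

lemma card_goodF (p q : PP k k) (i j : Fin k → Fin N)
    (hOC : ∀ x y, (compP p q).r x y → Sum.elim i j x = Sum.elim i j y) :
    Nat.card {m : Fin k → Fin N // GoodF p q i j m} = N ^ rlP p q := by
  classical
  set S := bigS q p with hS
  -- outer reading
  set ov : Fin k ⊕ (Fin k ⊕ Fin k) → Fin N := Sum.elim i (Sum.elim j j) with hov
  have nonmid_out : ∀ x : Fin k ⊕ (Fin k ⊕ Fin k), (∀ b, x ≠ midPt b) →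
      ∃ x', x = Sum.map id Sum.inr x' ∧ ov x = Sum.elim i j x' := by
    rintro (a | b | b) hx
    · exact ⟨Sum.inl a, rfl, rfl⟩
    · exact absurd rfl (hx b)
    · exact ⟨Sum.inr b, rfl, rfl⟩
  have hovS : ∀ x y, S.r x y → (∀ b, x ≠ midPt b) → (∀ b, y ≠ midPt b) →
      ov x = ov y := by
    intro x y hxy hx hy
    obtain ⟨x', rfl, hx2⟩ := nonmid_out x hx
    obtain ⟨y', rfl, hy2⟩ := nonmid_out y hy
    rw [hx2, hy2]
    exact hOC x' y' hxy
  have nonmid_exists : ∀ {c : Quotient S}, ¬ MidC p q c →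
      ∃ x, Quotient.mk S x = c ∧ ∀ b, x ≠ midPt b := by
    intro c hc
    unfold MidC at hc
    push_neg at hc
    exact hc
  -- the function associated to a choice on middle-only classes
  set f : ({c : Quotient S // MidC p q c} → Fin N) → Quotient S → Fin N :=
    fun u c => if h : MidC p q c then u ⟨c, h⟩
      else ov (Classical.choose (nonmid_exists h)) with hf
  set mF : ({c : Quotient S // MidC p q c} → Fin N) → (Fin k → Fin N) :=
    fun u b => f u (Quotient.mk S (midPt b)) with hmF
  have heval : ∀ u x, Sum.elim i (Sum.elim (mF u) j) x = f u (Quotient.mk S x) := by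
    intro u x
    have main : ∀ x, (∀ b, x ≠ midPt b) →
        Sum.elim i (Sum.elim (mF u) j) x = f u (Quotient.mk S x) := by
      intro x hx
      have hnm : ¬ MidC p q (Quotient.mk S x) := by
        intro hmc
        obtain ⟨b, hb⟩ := hmc x rfl
        exact hx b hb
      rw [hf]
      simp only
      rw [dif_neg hnm]
      have hspec := Classical.choose_spec (nonmid_exists hnm)
      set x₀ := Classical.choose (nonmid_exists hnm)
      have hrel : S.r x₀ x := Quotient.exact hspec.1
      have := hovS x₀ x hrel hspec.2 hx
      rw [this]
      obtain ⟨x', rfl, hx2⟩ := nonmid_out x hx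
      rcases x' with a | b <;> rfl
    rcases x with a | b | b
    · exact main _ (fun b h => Sum.inl_ne_inr h)
    · rfl
    · refine main _ (fun b' h => ?_)
      simp only [midPt] at h
      exact Sum.inr_ne_inl (Sum.inr.inj h)
  have hgood : ∀ u, GoodF p q i j (mF u) := by
    intro u x y hxy
    rw [heval, heval, Quotient.sound hxy]
  -- forward map
  have PhiAux : ∀ (m : {m : Fin k → Fin N // GoodF p q i j m}) (x y : Fin k ⊕ (Fin k ⊕ Fin k)),
      Quotient.mk S x = Quotient.mk S y →
      Sum.elim i (Sum.elim m.1 j) x = Sum.elim i (Sum.elim m.1 j) y :=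
    fun m x y h => m.2 x y (Quotient.exact h)
  set Phi : {m : Fin k → Fin N // GoodF p q i j m} → ({c : Quotient S // MidC p q c} → Fin N) :=
    fun m c => Sum.elim i (Sum.elim m.1 j) (Quotient.out c.1) with hPhi
  have key : Nat.card {m : Fin k → Fin N // GoodF p q i j m}
      = Nat.card ({c : Quotient S // MidC p q c} → Fin N) := by
    refine Nat.card_congr ⟨Phi, fun u => ⟨mF u, hgood u⟩, ?_, ?_⟩
    · -- left inverse
      rintro ⟨m, hm⟩
      refine Subtype.ext (funext fun b => ?_)
      show f (Phi ⟨m, hm⟩) (Quotient.mk S (midPt b)) = m b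
      by_cases h : MidC p q (Quotient.mk S (midPt b))
      · rw [hf]
        simp only
        rw [dif_pos h]
        show Sum.elim i (Sum.elim m j) (Quotient.out (Quotient.mk S (midPt b))) = m b
        have := PhiAux ⟨m, hm⟩ (Quotient.out (Quotient.mk S (midPt b))) (midPt b)
          (by rw [Quotient.out_eq])
        simpa using this
      · rw [hf]
        simp only
        rw [dif_neg h]
        have hspec := Classical.choose_spec (nonmid_exists h)
        set x₀ := Classical.choose (nonmid_exists h)
        have h1 : Sum.elim i (Sum.elim m j) x₀ = m b := by
          have := PhiAux ⟨m, hm⟩ x₀ (midPt b) hspec.1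
          simpa using this
        rw [← h1]
        obtain ⟨x', hx', hx2⟩ := nonmid_out x₀ hspec.2
        rw [hx']
        rcases x' with a | b' <;> rfl
    · -- right inverse
      intro u
      funext c
      show Sum.elim i (Sum.elim (mF u) j) (Quotient.out c.1) = u c
      rw [heval, Quotient.out_eq]
      rw [hf]
      simp only
      rw [dif_pos c.2]
  rw [key, Nat.card_fun, Nat.card_eq_fintype_card (α := Fin N), Fintype.card_fin, rlP_eq]

/-- The composition formula for the unnormalized maps. -/
lemma Tmat0_mul (N : ℕ) (p q : PP k k) :
    Tmat0 N p * Tmat0 N q = ((N : ℂ) ^ rlP p q) • Tmat0 N (compP p q) := by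
  classical
  ext j i
  rw [Matrix.mul_apply]
  simp only [Matrix.smul_apply, smul_eq_mul, Tmat0]
  have hterm : ∀ m : Fin k → Fin N,
      ((if (∀ x y, p.r x y → Sum.elim m j x = Sum.elim m j y) then (1:ℂ) else 0) *
       (if (∀ x y, q.r x y → Sum.elim i m x = Sum.elim i m y) then (1:ℂ) else 0))
      = if GoodF p q i j m then (1:ℂ) else 0 := by
    intro m
    rw [goodF_iff]
    by_cases h1 : (∀ x y, p.r x y → Sum.elim m j x = Sum.elim m j y)
    · by_cases h2 : (∀ x y, q.r x y → Sum.elim i m x = Sum.elim i m y)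
      · rw [if_pos h1, if_pos h2, if_pos ⟨h1, h2⟩, one_mul]
      · rw [if_pos h1, if_neg h2, if_neg (fun h => h2 h.2), one_mul]
    · by_cases h2 : (∀ x y, q.r x y → Sum.elim i m x = Sum.elim i m y)
      · rw [if_neg h1, if_pos h2, if_neg (fun h => h1 h.1), zero_mul]
      · rw [if_neg h1, if_neg h2, if_neg (fun h => h1 h.1), zero_mul]
  rw [Finset.sum_congr rfl (fun m _ => hterm m)]
  by_cases hOC : ∀ x y, (compP p q).r x y → Sum.elim i j x = Sum.elim i j y
  · rw [if_pos hOC, mul_one, Finset.sum_boole]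
    have : (Finset.univ.filter fun m : Fin k → Fin N => GoodF p q i j m).card
        = N ^ rlP p q := by
      rw [← Fintype.card_subtype, ← Nat.card_eq_fintype_card]
      exact card_goodF p q i j hOC
    rw [this]
    push_cast
    ring
  · rw [if_neg hOC, mul_zero]
    refine Finset.sum_eq_zero fun m _ => ?_
    rw [if_neg]
    intro hg
    exact hOC (goodF_outer p q i j m hg)

end Comp

section Proj
variable {k : ℕ}

lemma swap_r {p : PP k k} (hp : swapP p = p) {x y : Fin k ⊕ Fin k} (h : p.r x y) :
    p.r (Sum.swap x) (Sum.swap y) := by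
  have h' : (swapP p).r x y := by rw [hp]; exact h
  exact h'

/-- Through-class predicate. -/
def ThroughC (p : PP k k) (c : Quotient p) : Prop :=
  (∃ a : Fin k, Quotient.mk p (Sum.inl a) = c) ∧ (∃ b : Fin k, Quotient.mk p (Sum.inr b) = c)

/-- Lower-only class. -/
def LowC (p : PP k k) (c : Quotient p) : Prop :=
  ∀ x, Quotient.mk p x = c → ∃ b : Fin k, x = Sum.inr b

/-- Upper-only class. -/
def UpC (p : PP k k) (c : Quotient p) : Prop :=
  ∀ x, Quotient.mk p x = c → ∃ a : Fin k, x = Sum.inl a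

lemma tP_eq (p : PP k k) : tP p = Nat.card {c : Quotient p // ThroughC p c} := rfl

lemma midRel_symm {p q : PP k k} {x y : Fin k ⊕ (Fin k ⊕ Fin k)}
    (h : midRel q p x y) : midRel q p y x := by
  rcases h with ⟨a, b, hab, hx, hy⟩ | ⟨a, b, hab, hx, hy⟩
  · exact Or.inl ⟨b, a, q.iseqv.symm hab, hy, hx⟩
  · exact Or.inr ⟨b, a, p.iseqv.symm hab, hy, hx⟩

lemma pred_inv {p : PP k k} (hp : swapP p = p) {b : Fin k}
    (hb : ∀ z, p.r (Sum.inr b) z → ∃ b', z = Sum.inr b') :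
    ∀ x y, (bigS p p).r x y →
      ((∃ b', x = midPt b' ∧ p.r (Sum.inr b) (Sum.inr b')) ↔
       (∃ b', y = midPt b' ∧ p.r (Sum.inr b) (Sum.inr b'))) := by
  have mono : ∀ x y, midRel p p x y →
      (∃ b', x = midPt b' ∧ p.r (Sum.inr b) (Sum.inr b')) →
      (∃ b', y = midPt b' ∧ p.r (Sum.inr b) (Sum.inr b')) := by
    rintro x y h ⟨b', rfl, hbb'⟩
    rcases h with ⟨a, c, hac, hxa, hyc⟩ | ⟨a, c, hac, hxa, hyc⟩
    · rcases a with a' | b''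
      · exact absurd hxa (by simp [midPt])
      · have hb2 : b' = b'' := by simpa [midPt] using hxa
        subst hb2
        have htr : p.r (Sum.inr b) c := p.iseqv.trans hbb' hac
        obtain ⟨b₂, rfl⟩ := hb _ htr
        exact ⟨b₂, by simp [hyc, midPt], htr⟩
    · rcases a with b'' | a'
      · have hb2 : b' = b'' := by simpa [midPt] using hxa
        subst hb2
        have hsw : p.r (Sum.inr b') (Sum.swap c) := swap_r hp hac
        have htr : p.r (Sum.inr b) (Sum.swap c) := p.iseqv.trans hbb' hsw
        obtain ⟨b₂, hb₂⟩ := hb _ htr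
        rcases c with u | u
        · have hu : u = b₂ := by simpa using hb₂
          subst hu
          exact ⟨u, by simp [hyc, midPt], by rwa [← hb₂]⟩
        · exact absurd hb₂ (by simp)
      · exact absurd hxa (by simp [midPt])
  intro x y hxy
  induction hxy with
  | rel x y h => exact ⟨fun hx => mono x y h hx, fun hy => mono y x (midRel_symm h) hy⟩
  | refl => exact Iff.rfl
  | symm _ _ _ ih => exact ih.symm
  | trans _ _ _ _ _ ih1 ih2 => exact ih1.trans ih2

lemma low_closed {p : PP k k} {c : Quotient p} (hc : LowC p c) {b : Fin k}
    (hbc : Quotient.mk p (Sum.inr b) = c) :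
    ∀ z, p.r (Sum.inr b) z → ∃ b', z = Sum.inr b' := by
  intro z hz
  exact hc z (by rw [← hbc]; exact Quotient.sound (p.iseqv.symm hz))

lemma rl_card_low {p : PP k k} (hp : swapP p = p) :
    rlP p p = Nat.card {c : Quotient p // LowC p c} := by
  classical
  rw [rlP_eq]
  have mocRep : ∀ c : {c : Quotient (bigS p p) // MidC p p c},
      ∃ b : Fin k, Quotient.out c.1 = midPt b := fun c => c.2 _ (Quotient.out_eq _)
  have lowOf : ∀ c : {c : Quotient (bigS p p) // MidC p p c},
      LowC p (Quotient.mk p (Sum.inr (Classical.choose (mocRep c)))) := by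
    intro c x hx
    have hspec := Classical.choose_spec (mocRep c)
    set b := Classical.choose (mocRep c)
    have hrel : p.r x (Sum.inr b) := Quotient.exact hx
    rcases x with a | b'
    · exfalso
      have e1 : (bigS p p).r (Sum.inl a) (midPt b) :=
        Relation.EqvGen.rel _ _ (Or.inl ⟨Sum.inl a, Sum.inr b, hrel, rfl, rfl⟩)
      have hmk : Quotient.mk (bigS p p) (Sum.inl a) = c.1 := by
        rw [← Quotient.out_eq c.1, hspec]
        exact Quotient.sound e1
      obtain ⟨b'', hb''⟩ := c.2 _ hmk
      exact Sum.inl_ne_inr hb''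
    · exact ⟨b', rfl⟩
  refine Nat.card_eq_of_bijective
    (fun c => ⟨Quotient.mk p (Sum.inr (Classical.choose (mocRep c))), lowOf c⟩) ⟨?_, ?_⟩
  · -- injective
    intro c c' h
    have h1 := Subtype.ext_iff.1 h
    simp only at h1
    have hspec := Classical.choose_spec (mocRep c)
    have hspec' := Classical.choose_spec (mocRep c')
    set b := Classical.choose (mocRep c)
    set b' := Classical.choose (mocRep c')
    have hpr : p.r (Sum.inr b) (Sum.inr b') := Quotient.exact h1
    have e1 : (bigS p p).r (midPt b) (midPt b') :=
      Relation.EqvGen.rel _ _ (Or.inl ⟨Sum.inr b, Sum.inr b', hpr, rfl, rfl⟩)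
    apply Subtype.ext
    rw [← Quotient.out_eq c.1, ← Quotient.out_eq c'.1, hspec, hspec']
    exact Quotient.sound e1
  · -- surjective
    intro c
    obtain ⟨b, hspec⟩ : ∃ b : Fin k, Quotient.out c.1 = Sum.inr b := c.2 _ (Quotient.out_eq _)
    have hbc : Quotient.mk p (Sum.inr b) = c.1 := by rw [← hspec, Quotient.out_eq]
    have hb := low_closed c.2 hbc
    have hmid : MidC p p (Quotient.mk (bigS p p) (midPt b)) := by
      intro x hx
      have hrel : (bigS p p).r x (midPt b) := Quotient.exact hx
      obtain ⟨b', hb', _⟩ := (pred_inv hp hb x (midPt b) hrel).2 ⟨b, rfl, p.iseqv.refl _⟩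
      exact ⟨b', hb'⟩
    refine ⟨⟨Quotient.mk (bigS p p) (midPt b), hmid⟩, ?_⟩
    apply Subtype.ext
    have hspec₂ := Classical.choose_spec (mocRep ⟨Quotient.mk (bigS p p) (midPt b), hmid⟩)
    set b₂ := Classical.choose (mocRep ⟨Quotient.mk (bigS p p) (midPt b), hmid⟩)
    have hrel : (bigS p p).r (midPt b₂) (midPt b) := by
      rw [← hspec₂]
      exact Quotient.exact (Quotient.out_eq _)
    obtain ⟨b₃, hb₃, hr₃⟩ :=
      (pred_inv hp hb (midPt b₂) (midPt b) hrel).2 ⟨b, rfl, p.iseqv.refl _⟩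
    have hbeq : b₂ = b₃ := by simpa [midPt] using hb₃
    show Quotient.mk p (Sum.inr b₂) = c.1
    rw [← hbc]
    exact Quotient.sound (p.iseqv.symm (hbeq ▸ hr₃))

lemma not_through_iff {p : PP k k} (c : Quotient p) :
    ¬ ThroughC p c ↔ (LowC p c ∨ UpC p c) := by
  constructor
  · intro h
    by_cases hu : ∃ a : Fin k, Quotient.mk p (Sum.inl a) = c
    · right
      intro x hx
      rcases x with a | b
      · exact ⟨a, rfl⟩
      · exact absurd ⟨hu, ⟨b, hx⟩⟩ h
    · left
      intro x hx
      rcases x with a | b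
      · exact absurd ⟨a, hx⟩ hu
      · exact ⟨b, rfl⟩
  · rintro (h | h) ⟨⟨a, ha⟩, ⟨b, hb⟩⟩
    · obtain ⟨b', hb'⟩ := h _ ha
      exact Sum.inl_ne_inr hb'
    · obtain ⟨a', ha'⟩ := h _ hb
      exact Sum.inr_ne_inl ha'

lemma low_up_disjoint {p : PP k k} : Disjoint (LowC p) (UpC p) := by
  rw [Pi.disjoint_iff]
  intro c
  rw [Prop.disjoint_iff]
  rintro ⟨hl, hu⟩
  obtain ⟨b, hb⟩ := hl _ (Quotient.out_eq c)
  obtain ⟨a, ha⟩ := hu _ (Quotient.out_eq c)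
  rw [hb] at ha
  exact Sum.inr_ne_inl ha

lemma card_up_eq_low {p : PP k k} (hp : swapP p = p) :
    Nat.card {c : Quotient p // UpC p c} = Nat.card {c : Quotient p // LowC p c} := by
  classical
  have hiff : ∀ a b : Fin k ⊕ Fin k, p.r a b ↔ p.r (Sum.swap a) (Sum.swap b) := by
    intro a b
    constructor
    · exact swap_r hp
    · intro h
      have := swap_r hp h
      rwa [Sum.swap_swap, Sum.swap_swap] at this
  have e : Quotient p ≃ Quotient p :=
    Quotient.congr (Equiv.sumComm (Fin k) (Fin k)) (fun a b => hiff a b)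
  apply Nat.card_congr
  refine Equiv.subtypeEquiv (Quotient.congr (Equiv.sumComm (Fin k) (Fin k))
    (fun a b => hiff a b)) ?_
  intro c
  constructor
  · intro h x hx
    have h2 : Quotient.congr (Equiv.sumComm (Fin k) (Fin k)) (fun a b => hiff a b)
        (Quotient.mk p (Sum.swap x))
        = Quotient.congr (Equiv.sumComm (Fin k) (Fin k)) (fun a b => hiff a b) c := by
      change Quotient.mk p (Sum.swap (Sum.swap x)) = _
      show Quotient.mk p (Sum.swap (Sum.swap x)) = _
      rw [Sum.swap_swap]
      exact hx
    have h3 : Quotient.mk p (Sum.swap x) = c :=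
      (Quotient.congr (Equiv.sumComm (Fin k) (Fin k)) (fun a b => hiff a b)).injective h2
    obtain ⟨a, ha⟩ := h _ h3
    rcases x with a' | b'
    · exact absurd ha (by simp)
    · exact ⟨b', rfl⟩
  · intro h x hx
    have h2 : Quotient.congr (Equiv.sumComm (Fin k) (Fin k)) (fun a b => hiff a b)
        (Quotient.mk p x)
        = Quotient.congr (Equiv.sumComm (Fin k) (Fin k)) (fun a b => hiff a b) c := by
      rw [hx]
    change Quotient.mk p (Sum.swap x) = _ at h2
    obtain ⟨b, hb⟩ := h _ h2
    rcases x with a' | b'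
    · exact ⟨a', rfl⟩
    · exact absurd hb (by simp)

lemma bP_split {p : PP k k} (hp : swapP p = p) :
    bP p = tP p + 2 * rlP p p := by
  classical
  have h1 : bP p = tP p + Nat.card {c : Quotient p // ¬ ThroughC p c} := by
    rw [bP, tP_eq, ← Nat.card_sum]
    exact Nat.card_congr (Equiv.sumCompl (ThroughC p)).symm
  have h2 : Nat.card {c : Quotient p // ¬ ThroughC p c}
      = Nat.card {c : Quotient p // LowC p c} + Nat.card {c : Quotient p // UpC p c} := by
    rw [← Nat.card_sum]
    exact Nat.card_congr ((Equiv.subtypeEquivRight not_through_iff).trans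
      (subtypeOrEquiv _ _ low_up_disjoint))
  rw [h1, h2, card_up_eq_low hp, rl_card_low hp]
  ring

lemma beta_eq_two_rl {p : PP k k} (hp : swapP p = p) : betaP p = 2 * rlP p p := by
  rw [betaP, bP_split hp]
  omega

end Proj

section Main
open Matrix

lemma scalar_eq_of_smul_eq {k N : ℕ} (hN : 2 ≤ N) {r s : PP k k} {c d : ℂ}
    (h : c • Tmat0 N r = d • Tmat0 N s) : c = d := by
  have h2 := congrFun (congrFun h (fun _ => (⟨0, by omega⟩ : Fin N)))
    (fun _ => (⟨0, by omega⟩ : Fin N))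
  simpa [Matrix.smul_apply, Tmat0_const_entry] using h2

theorem order_iff_projections' {k : ℕ} (N : ℕ) (hN : 2 ≤ N) (p q : PP k k)
    (hp : isProjective p) (hq : isProjective q) :
    compP p q = q ↔
      (TmatN N p * TmatN N q = TmatN N q ∧ TmatN N q * TmatN N p = TmatN N q) := by
  obtain ⟨hps, hpi⟩ := hp
  obtain ⟨hqs, hqi⟩ := hq
  have hN0 : (N : ℂ) ≠ 0 := Nat.cast_ne_zero.mpr (by omega)
  have hNpow : ∀ a : ℕ, ((N : ℂ) ^ a) ≠ 0 := fun a => pow_ne_zero a hN0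
  have hscal : ∀ r : PP k k, swapP r = r →
      (N : ℂ) ^ (-(betaP r : ℂ) / 2) * (N : ℂ) ^ (rlP r r) = 1 := by
    intro r hr
    rw [beta_eq_two_rl hr]
    have he : (-((2 * rlP r r : ℕ) : ℂ) / 2) = -((rlP r r : ℕ) : ℂ) := by
      push_cast; ring
    rw [he, Complex.cpow_neg, Complex.cpow_natCast]
    exact inv_mul_cancel₀ (hNpow _)
  constructor
  · intro hpq
    have hPP : Tmat0 N p * Tmat0 N p = ((N : ℂ) ^ rlP p p) • Tmat0 N p := by
      rw [Tmat0_mul, hpi]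
    have hPQ : Tmat0 N p * Tmat0 N q = ((N : ℂ) ^ rlP p q) • Tmat0 N q := by
      rw [Tmat0_mul, hpq]
    have hQP' : Tmat0 N q * Tmat0 N p = ((N : ℂ) ^ rlP p q) • Tmat0 N q := by
      have ht : (Tmat0 N p * Tmat0 N q)ᵀ = Tmat0 N q * Tmat0 N p := by
        rw [Matrix.transpose_mul, Tmat0_transpose, Tmat0_transpose, hps, hqs]
      rw [← ht, hPQ, Matrix.transpose_smul, Tmat0_transpose, hqs]
    have hA : ((N : ℂ) ^ rlP p p * (N : ℂ) ^ rlP p q) • Tmat0 N q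
        = ((N : ℂ) ^ rlP p q * (N : ℂ) ^ rlP p q) • Tmat0 N q := by
      calc ((N : ℂ) ^ rlP p p * (N : ℂ) ^ rlP p q) • Tmat0 N q
          = (Tmat0 N p * Tmat0 N p) * Tmat0 N q := by
            rw [hPP, Matrix.smul_mul, hPQ, smul_smul]
        _ = Tmat0 N p * (Tmat0 N p * Tmat0 N q) := Matrix.mul_assoc _ _ _
        _ = ((N : ℂ) ^ rlP p q * (N : ℂ) ^ rlP p q) • Tmat0 N q := by
            rw [hPQ, Matrix.mul_smul, hPQ, smul_smul]
    have hE1 : (N : ℂ) ^ rlP p p = (N : ℂ) ^ rlP p q :=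
      mul_right_cancel₀ (hNpow _) (scalar_eq_of_smul_eq hN hA)
    refine ⟨?_, ?_⟩
    · simp only [TmatN]
      rw [Matrix.smul_mul, Matrix.mul_smul, hPQ, ← hE1, smul_smul, smul_smul]
      congr 1
      calc (N : ℂ) ^ (-(betaP p : ℂ) / 2) * (N : ℂ) ^ (-(betaP q : ℂ) / 2)
            * (N : ℂ) ^ (rlP p p)
          = ((N : ℂ) ^ (-(betaP p : ℂ) / 2) * (N : ℂ) ^ (rlP p p))
            * (N : ℂ) ^ (-(betaP q : ℂ) / 2) := by ring
        _ = (N : ℂ) ^ (-(betaP q : ℂ) / 2) := by rw [hscal p hps, one_mul]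
    · simp only [TmatN]
      rw [Matrix.smul_mul, Matrix.mul_smul, hQP', ← hE1, smul_smul, smul_smul]
      congr 1
      calc (N : ℂ) ^ (-(betaP q : ℂ) / 2) * (N : ℂ) ^ (-(betaP p : ℂ) / 2)
            * (N : ℂ) ^ (rlP p p)
          = ((N : ℂ) ^ (-(betaP p : ℂ) / 2) * (N : ℂ) ^ (rlP p p))
            * (N : ℂ) ^ (-(betaP q : ℂ) / 2) := by ring
        _ = (N : ℂ) ^ (-(betaP q : ℂ) / 2) := by rw [hscal p hps, one_mul]
  · rintro ⟨h1, _⟩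
    have hexp : TmatN N p * TmatN N q
        = ((N : ℂ) ^ (-(betaP p : ℂ) / 2) * (N : ℂ) ^ (-(betaP q : ℂ) / 2)
            * (N : ℂ) ^ (rlP p q)) • Tmat0 N (compP p q) := by
      simp only [TmatN]
      rw [Matrix.smul_mul, Matrix.mul_smul, Tmat0_mul, smul_smul, smul_smul, mul_assoc]
    have heq : ((N : ℂ) ^ (-(betaP p : ℂ) / 2) * (N : ℂ) ^ (-(betaP q : ℂ) / 2)
          * (N : ℂ) ^ (rlP p q)) • Tmat0 N (compP p q)
        = ((N : ℂ) ^ (-(betaP q : ℂ) / 2)) • Tmat0 N q := by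
      rw [← hexp, h1, TmatN]
    have hc := scalar_eq_of_smul_eq hN heq
    rw [hc] at heq
    have hcq : ((N : ℂ) ^ (-(betaP q : ℂ) / 2)) ≠ 0 := fun h =>
      hN0 ((Complex.cpow_eq_zero_iff _ _).1 h).1
    exact Tmat0_inj hN (smul_right_injective _ hcq heq)

end Main


/-- for projective partitions and `N ≥ 2`, `q ⪯ p` (i.e. `pq = q`) iff
`T_q ≤ T_p` as projections. -/
theorem order_iff_projections {k : ℕ} (N : ℕ) (hN : 2 ≤ N) (p q : PP k k)
    (hp : isProjective p) (hq : isProjective q) :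
    compP p q = q ↔
      (TmatN N p * TmatN N q = TmatN N q ∧ TmatN N q * TmatN N p = TmatN N q) := by
  exact order_iff_projections' N hN p q hp hq
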